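/- Let M > 0, let Δ > 0, let x_1 be real, and let k > 2 be an integer. If Q is a real polynomial of degree 2 with leading coefficient a_2 such that |Q(x_1 + jΔ)| ≤ M for all integers j with 0 ≤ j ≤ k-1, then a_2 ≤ (M/Δ^2)·(8/(k-1)^2) when k is odd, and a_2 ≤ (M/Δ^2)·(8/(k(k-2))) when k is even. -/

import Mathlib

set_option maxHeartbeats 1000000 in
theorem stmt_1 (M Δ x₁ : ℝ) (hM : 0 < M) (hΔ : 0 < Δ) (k : ℕ) (hk : 2 < k)
    (Q : Polynomial ℝ) (hdeg : Q.natDegree = 2)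
    (hbd : ∀ j : ℕ, j ≤ k - 1 → |Q.eval (x₁ + j * Δ)| ≤ M) :
    (Odd k → Q.leadingCoeff ≤ (M / Δ ^ 2) * (8 / ((k : ℝ) - 1) ^ 2)) ∧
    (Even k → Q.leadingCoeff ≤ (M / Δ ^ 2) * (8 / ((k : ℝ) * ((k : ℝ) - 2)))) := by
  obtain ⟨c, hcc⟩ : ∃ c, Q.coeff 0 = c := ⟨_, rfl⟩
  obtain ⟨b, hbb⟩ : ∃ b, Q.coeff 1 = b := ⟨_, rfl⟩
  obtain ⟨a, haa⟩ : ∃ a, Q.coeff 2 = a := ⟨_, rfl⟩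
  have hlc : Q.leadingCoeff = a := by rw [Polynomial.leadingCoeff, hdeg, haa]
  have heval : ∀ x : ℝ, Q.eval x = c + b * x + a * x ^ 2 := by
    intro x
    rw [Polynomial.eval_eq_sum_range, hdeg]
    simp [Finset.sum_range_succ, hcc, hbb, haa]
    try ring
  rw [hlc]
  constructor
  · rintro ⟨m, hm⟩
    have hm1 : 1 ≤ m := by omega
    have h0 := hbd 0 (by omega)
    have h1 := hbd m (by omega)
    have h2 := hbd (2 * m) (by omega)
    rw [heval, abs_le] at h0 h1 h2
    push_cast at h0 h1 h2
    have hmR : (1 : ℝ) ≤ (m : ℝ) := by exact_mod_cast hm1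
    have hkR : (k : ℝ) = 2 * m + 1 := by exact_mod_cast hm
    have hkey : a * (2 * ((m : ℝ) * Δ) ^ 2) ≤ 4 * M := by nlinarith [h0.1, h0.2, h1.1, h1.2, h2.1, h2.2]
    have hpos : (0:ℝ) < Δ ^ 2 * ((k : ℝ) - 1) ^ 2 := by
      apply mul_pos (by positivity); nlinarith [hkR, hmR]
    rw [div_mul_div_comm, le_div_iff₀ hpos, hkR]
    nlinarith [hkey]
  · rintro ⟨m, hm⟩
    have hm2 : 2 ≤ m := by omega
    have h0 := hbd 0 (by omega)
    have h1 := hbd m (by omega)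
    have h2 := hbd (2 * m - 1) (by omega)
    have hcast : ((2 * m - 1 : ℕ) : ℝ) = 2 * (m : ℝ) - 1 := by
      have : (2 * m - 1 : ℕ) + 1 = 2 * m := by omega
      have := congrArg (fun n : ℕ => (n : ℝ)) this
      push_cast at this
      linarith
    rw [heval, abs_le] at h0 h1 h2
    rw [hcast] at h2
    push_cast at h0 h1
    have hmR : (2 : ℝ) ≤ (m : ℝ) := by exact_mod_cast hm2
    have hkR : (k : ℝ) = 2 * m := by rw [hm]; push_cast; ring
    -- identity: (m-1)*E0 - (2m-1)*Em + m*E(2m-1) = a*Δ^2*m*(2m-1)*(m-1)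
    have hid : a * (Δ ^ 2 * (m : ℝ) * (2 * (m:ℝ) - 1) * ((m : ℝ) - 1)) =
        ((m:ℝ) - 1) * (c + b * (x₁ + 0 * Δ) + a * (x₁ + 0 * Δ) ^ 2)
        - (2 * (m:ℝ) - 1) * (c + b * (x₁ + (m:ℝ) * Δ) + a * (x₁ + (m:ℝ) * Δ) ^ 2)
        + (m:ℝ) * (c + b * (x₁ + (2 * (m:ℝ) - 1) * Δ) + a * (x₁ + (2 * (m:ℝ) - 1) * Δ) ^ 2) := by
      ring
    have A := mul_le_mul_of_nonneg_left h0.2 (by linarith : (0:ℝ) ≤ (m:ℝ) - 1)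
    have B := mul_le_mul_of_nonneg_left h1.1 (by linarith : (0:ℝ) ≤ 2 * (m:ℝ) - 1)
    have C := mul_le_mul_of_nonneg_left h2.2 (by linarith : (0:ℝ) ≤ (m:ℝ))
    have hkey : a * (Δ ^ 2 * (m : ℝ) * (2 * (m:ℝ) - 1) * ((m : ℝ) - 1)) ≤ (4 * (m:ℝ) - 2) * M := by
      rw [hid]; nlinarith [A, B, C]
    have hq : (0 : ℝ) < 2 * (m : ℝ) - 1 := by linarith
    have hkey2 : a * (Δ ^ 2 * (m : ℝ) * ((m : ℝ) - 1)) ≤ 2 * M := by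
      rw [← mul_le_mul_iff_of_pos_right hq]
      have e : a * (Δ ^ 2 * (m:ℝ) * ((m:ℝ) - 1)) * (2 * (m:ℝ) - 1)
          = a * (Δ ^ 2 * (m : ℝ) * (2 * (m:ℝ) - 1) * ((m : ℝ) - 1)) := by ring
      rw [e]; linarith
    have hpos : (0:ℝ) < Δ ^ 2 * ((k : ℝ) * ((k : ℝ) - 2)) := by
      apply mul_pos (by positivity); nlinarith [hkR, hmR]
    rw [div_mul_div_comm, le_div_iff₀ hpos, hkR]
    nlinarith [hkey2]
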